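/- For a three-block decomposition [n] = P \sqcup Q \sqcup J, the iterated unshuffle signs satisfy sgn(\sigma_{P\sqcup Q, J}) \cdot sgn(\sigma_{P,Q}) = sgn(\sigma_{P, Q\sqcup J}) \cdot sgn(\sigma_{Q,J}), where \sigma_{P,Q} is taken inside the ordered set P \sqcup Q and \sigma_{Q,J} inside Q \sqcup J. -/
import Mathlib


/-- The unshuffle permutation `σ_{I,Iᶜ}` of a finite linearly ordered type:
it lists the elements of `I` in increasing order first, followed by the elements of the
complement `Iᶜ` in increasing order. -/
noncomputable def unshuffle {α : Type*} [Fintype α] [LinearOrder α] [DecidableEq α]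
    (I : Finset α) : Equiv.Perm α :=
  (Fintype.orderIsoFinOfCardEq α rfl).toEquiv.symm.trans <|
    (finCongr I.card_add_card_compl.symm).trans <|
      finSumFinEquiv.symm.trans <|
        (Equiv.sumCongr (I.orderIsoOfFin rfl).toEquiv (Iᶜ.orderIsoOfFin rfl).toEquiv).trans <|
          (Equiv.sumCongr (Equiv.refl _)
            (Equiv.subtypeEquivRight (fun x => Finset.mem_compl))).trans <|
            Equiv.sumCompl (· ∈ I)

section Aux
variable {α : Type*} [Fintype α] [LinearOrder α] [DecidableEq α]

lemma unshuffle_apply_inl (I : Finset α) (k : Fin (Fintype.card α)) (j : Fin I.card)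
    (hkj : (k : ℕ) = j) :
    unshuffle I (Fintype.orderIsoFinOfCardEq α rfl k) = I.orderEmbOfFin rfl j := by
  have h1 : (finCongr I.card_add_card_compl.symm) k = Fin.castAdd Iᶜ.card j := by
    ext; simp [hkj]
  simp only [unshuffle, Equiv.trans_apply]
  rw [show (Fintype.orderIsoFinOfCardEq α rfl).toEquiv.symm
        ((Fintype.orderIsoFinOfCardEq α rfl) k) = k from
      (Fintype.orderIsoFinOfCardEq α rfl).toEquiv.symm_apply_apply k,
    h1, finSumFinEquiv_symm_apply_castAdd]
  simp

lemma unshuffle_apply_inr (I : Finset α) (k : Fin (Fintype.card α)) (j : Fin Iᶜ.card)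
    (hkj : (k : ℕ) = I.card + j) :
    unshuffle I (Fintype.orderIsoFinOfCardEq α rfl k) = Iᶜ.orderEmbOfFin rfl j := by
  have h1 : (finCongr I.card_add_card_compl.symm) k = Fin.natAdd I.card j := by
    ext; simp [hkj]
  simp only [unshuffle, Equiv.trans_apply]
  rw [show (Fintype.orderIsoFinOfCardEq α rfl).toEquiv.symm
        ((Fintype.orderIsoFinOfCardEq α rfl) k) = k from
      (Fintype.orderIsoFinOfCardEq α rfl).toEquiv.symm_apply_apply k,
    h1, finSumFinEquiv_symm_apply_natAdd]
  simp

lemma coe_orderEmbOfFin_eq {p : α → Prop} [DecidablePred p] (t : Finset {x // p x}) (R : Finset α)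
    (hm : ∀ x : {x // p x}, x ∈ t → ↑x ∈ R) {m : ℕ} (h : t.card = m) (h2 : R.card = m)
    (j : Fin m) :
    ((t.orderEmbOfFin h j : {x // p x}) : α) = R.orderEmbOfFin h2 j := by
  have hsm : StrictMono (fun j : Fin m => ((t.orderEmbOfFin h j : {x // p x}) : α)) :=
    fun a b hab => (t.orderEmbOfFin h).strictMono hab
  exact congrFun (Finset.orderEmbOfFin_unique (s := R) h2
    (f := fun j : Fin m => ((t.orderEmbOfFin h j : {x // p x}) : α))
    (fun j => hm _ (Finset.orderEmbOfFin_mem t h j)) hsm) j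

lemma orderIsoFinOfCardEq_coe (S : Finset α) {m : ℕ}
    (h : Fintype.card {x // x ∈ S} = m) (h2 : S.card = m) (j : Fin m) :
    ((Fintype.orderIsoFinOfCardEq {x // x ∈ S} h j : {x // x ∈ S}) : α) =
      S.orderEmbOfFin h2 j := by
  have : Fintype.orderIsoFinOfCardEq {x // x ∈ S} h = S.orderIsoOfFin h2 :=
    Subsingleton.elim _ _
  rw [this, Finset.coe_orderIsoOfFin_apply]

lemma unshuffle_mul (P Q : Finset α) (hPQ : Disjoint P Q) :
    Equiv.Perm.ofSubtype (unshuffle (P.subtype (· ∈ P ∪ Q))) * unshuffle (P ∪ Q) =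
      Equiv.Perm.ofSubtype (unshuffle (Q.subtype (· ∈ Pᶜ))) * unshuffle P := by
  have hsub : P ⊆ P ∪ Q := Finset.subset_union_left
  have hQc : Q ⊆ Pᶜ := fun x hx => Finset.mem_compl.2 fun hP => Finset.disjoint_left.1 hPQ hP hx
  have cardS : (P ∪ Q).card = P.card + Q.card := Finset.card_union_of_disjoint hPQ
  have cA : P.card + Pᶜ.card = Fintype.card α := P.card_add_card_compl
  have cS : (P ∪ Q).card + (P ∪ Q)ᶜ.card = Fintype.card α := (P ∪ Q).card_add_card_compl
  have ctS : Fintype.card {x // x ∈ P ∪ Q} = (P ∪ Q).card := Fintype.card_coe _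
  have ctP : Fintype.card {x // x ∈ Pᶜ} = Pᶜ.card := Fintype.card_coe _
  have cPsub : (P.subtype (· ∈ P ∪ Q)).card = P.card := by
    rw [Finset.card_subtype, Finset.filter_true_of_mem fun x hx => hsub hx]
  have cQsub : (Q.subtype (· ∈ Pᶜ)).card = Q.card := by
    rw [Finset.card_subtype, Finset.filter_true_of_mem fun x hx => hQc hx]
  have cPsubc : ((P.subtype (· ∈ P ∪ Q))ᶜ).card = Q.card := by
    rw [Finset.card_compl, cPsub, ctS, cardS]; omega
  have cQsubc : ((Q.subtype (· ∈ Pᶜ))ᶜ).card = (P ∪ Q)ᶜ.card := by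
    rw [Finset.card_compl, cQsub, ctP]; omega
  have hm1 : ∀ x : {x // x ∈ P ∪ Q}, x ∈ P.subtype (· ∈ P ∪ Q) → ↑x ∈ P :=
    fun x hx => Finset.mem_subtype.1 hx
  have hm2 : ∀ x : {x // x ∈ P ∪ Q}, x ∈ (P.subtype (· ∈ P ∪ Q))ᶜ → ↑x ∈ Q := by
    intro x hx
    have h1 : ↑x ∉ P := fun h => Finset.mem_compl.1 hx (Finset.mem_subtype.2 h)
    exact (Finset.mem_union.1 x.2).resolve_left h1
  have hm3 : ∀ x : {x // x ∈ Pᶜ}, x ∈ Q.subtype (· ∈ Pᶜ) → ↑x ∈ Q :=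
    fun x hx => Finset.mem_subtype.1 hx
  have hm4 : ∀ x : {x // x ∈ Pᶜ}, x ∈ (Q.subtype (· ∈ Pᶜ))ᶜ → ↑x ∈ (P ∪ Q)ᶜ := by
    intro x hx
    have h1 : ↑x ∉ Q := fun h => Finset.mem_compl.1 hx (Finset.mem_subtype.2 h)
    have h2 : ↑x ∉ P := Finset.mem_compl.1 x.2
    exact Finset.mem_compl.2 fun h => (Finset.mem_union.1 h).elim h2 h1
  apply Equiv.ext
  intro x
  obtain ⟨k, rfl⟩ : ∃ k, (Fintype.orderIsoFinOfCardEq α rfl) k = x :=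
    ⟨_, (Fintype.orderIsoFinOfCardEq α rfl).apply_symm_apply x⟩
  have hk : (k : ℕ) < Fintype.card α := k.2
  simp only [Equiv.Perm.mul_apply]
  by_cases h1 : (k : ℕ) < P.card
  · -- Case 1 : k < |P|
    have lt1 : (k : ℕ) < (P ∪ Q).card := by omega
    rw [unshuffle_apply_inl (P ∪ Q) k ⟨k, lt1⟩ rfl,
      unshuffle_apply_inl P k ⟨k, h1⟩ rfl,
      Equiv.Perm.ofSubtype_apply_of_not_mem _
        (by simp : ¬ (P.orderEmbOfFin rfl ⟨k, h1⟩ ∈ Pᶜ)),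
      Equiv.Perm.ofSubtype_apply_of_mem _
        (Finset.orderEmbOfFin_mem (P ∪ Q) rfl ⟨k, lt1⟩)]
    have hrep : (⟨(P ∪ Q).orderEmbOfFin rfl ⟨k, lt1⟩,
        Finset.orderEmbOfFin_mem (P ∪ Q) rfl ⟨k, lt1⟩⟩ : {x // x ∈ P ∪ Q}) =
        Fintype.orderIsoFinOfCardEq {x // x ∈ P ∪ Q} rfl ⟨k, by rw [ctS]; exact lt1⟩ := by
      apply Subtype.ext
      rw [orderIsoFinOfCardEq_coe (P ∪ Q) rfl ctS.symm]
      exact Finset.orderEmbOfFin_eq_orderEmbOfFin_iff.2 rfl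
    rw [hrep, unshuffle_apply_inl (P.subtype (· ∈ P ∪ Q)) _ ⟨k, by rw [cPsub]; exact h1⟩ rfl,
      coe_orderEmbOfFin_eq _ P hm1 rfl cPsub.symm]
    exact Finset.orderEmbOfFin_eq_orderEmbOfFin_iff.2 rfl
  · by_cases h2 : (k : ℕ) < P.card + Q.card
    · -- Case 2 : |P| ≤ k < |P| + |Q|
      have lt1 : (k : ℕ) < (P ∪ Q).card := by omega
      have ltPc : (k : ℕ) - P.card < Pᶜ.card := by omega
      rw [unshuffle_apply_inl (P ∪ Q) k ⟨k, lt1⟩ rfl,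
        unshuffle_apply_inr P k ⟨(k : ℕ) - P.card, ltPc⟩ (by simp; omega),
        Equiv.Perm.ofSubtype_apply_of_mem _
          (Finset.orderEmbOfFin_mem (P ∪ Q) rfl ⟨k, lt1⟩),
        Equiv.Perm.ofSubtype_apply_of_mem _
          (Finset.orderEmbOfFin_mem Pᶜ rfl ⟨(k : ℕ) - P.card, ltPc⟩)]
      have hrep : (⟨(P ∪ Q).orderEmbOfFin rfl ⟨k, lt1⟩,
          Finset.orderEmbOfFin_mem (P ∪ Q) rfl ⟨k, lt1⟩⟩ : {x // x ∈ P ∪ Q}) =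
          Fintype.orderIsoFinOfCardEq {x // x ∈ P ∪ Q} rfl ⟨k, by rw [ctS]; exact lt1⟩ := by
        apply Subtype.ext
        rw [orderIsoFinOfCardEq_coe (P ∪ Q) rfl ctS.symm]
        exact Finset.orderEmbOfFin_eq_orderEmbOfFin_iff.2 rfl
      have hrep' : (⟨Pᶜ.orderEmbOfFin rfl ⟨(k : ℕ) - P.card, ltPc⟩,
          Finset.orderEmbOfFin_mem Pᶜ rfl ⟨(k : ℕ) - P.card, ltPc⟩⟩ : {x // x ∈ Pᶜ}) =
          Fintype.orderIsoFinOfCardEq {x // x ∈ Pᶜ} rfl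
            ⟨(k : ℕ) - P.card, by rw [ctP]; exact ltPc⟩ := by
        apply Subtype.ext
        rw [orderIsoFinOfCardEq_coe Pᶜ rfl ctP.symm]
        exact Finset.orderEmbOfFin_eq_orderEmbOfFin_iff.2 rfl
      rw [hrep, hrep',
        unshuffle_apply_inr (P.subtype (· ∈ P ∪ Q)) _
          ⟨(k : ℕ) - P.card, by rw [cPsubc]; omega⟩ (by simp [cPsub]; omega),
        unshuffle_apply_inl (Q.subtype (· ∈ Pᶜ)) _
          ⟨(k : ℕ) - P.card, by rw [cQsub]; omega⟩ rfl,
        coe_orderEmbOfFin_eq _ Q hm2 rfl cPsubc.symm,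
        coe_orderEmbOfFin_eq _ Q hm3 rfl cQsub.symm]
      exact Finset.orderEmbOfFin_eq_orderEmbOfFin_iff.2 rfl
    · -- Case 3 : |P| + |Q| ≤ k
      have ltSc : (k : ℕ) - (P ∪ Q).card < (P ∪ Q)ᶜ.card := by omega
      have ltPc : (k : ℕ) - P.card < Pᶜ.card := by omega
      rw [unshuffle_apply_inr (P ∪ Q) k ⟨(k : ℕ) - (P ∪ Q).card, ltSc⟩ (by simp; omega),
        unshuffle_apply_inr P k ⟨(k : ℕ) - P.card, ltPc⟩ (by simp; omega),
        Equiv.Perm.ofSubtype_apply_of_not_mem _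
          (by
            have := Finset.orderEmbOfFin_mem (P ∪ Q)ᶜ rfl ⟨(k : ℕ) - (P ∪ Q).card, ltSc⟩
            simpa using Finset.mem_compl.1 this),
        Equiv.Perm.ofSubtype_apply_of_mem _
          (Finset.orderEmbOfFin_mem Pᶜ rfl ⟨(k : ℕ) - P.card, ltPc⟩)]
      have hrep' : (⟨Pᶜ.orderEmbOfFin rfl ⟨(k : ℕ) - P.card, ltPc⟩,
          Finset.orderEmbOfFin_mem Pᶜ rfl ⟨(k : ℕ) - P.card, ltPc⟩⟩ : {x // x ∈ Pᶜ}) =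
          Fintype.orderIsoFinOfCardEq {x // x ∈ Pᶜ} rfl
            ⟨(k : ℕ) - P.card, by rw [ctP]; exact ltPc⟩ := by
        apply Subtype.ext
        rw [orderIsoFinOfCardEq_coe Pᶜ rfl ctP.symm]
        exact Finset.orderEmbOfFin_eq_orderEmbOfFin_iff.2 rfl
      rw [hrep',
        unshuffle_apply_inr (Q.subtype (· ∈ Pᶜ)) _
          ⟨(k : ℕ) - P.card - Q.card, by rw [cQsubc]; omega⟩ (by simp [cQsub]; omega),
        coe_orderEmbOfFin_eq _ (P ∪ Q)ᶜ hm4 rfl cQsubc.symm]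
      exact (Finset.orderEmbOfFin_eq_orderEmbOfFin_iff.2 (by simp [cardS]; omega)).symm
end Aux

/-- Associativity of unshuffle signs for a three-block decomposition `[n] = P ⊔ Q ⊔ J`:
`sgn σ_{P∪Q, J} · sgn σ_{P,Q} = sgn σ_{P, Q∪J} · sgn σ_{Q,J}`, where `σ_{P,Q}` is taken
inside the ordered set `P ∪ Q` and `σ_{Q,J}` inside `Q ∪ J`. -/
theorem sign_unshuffle_assoc {n : ℕ} (P Q J : Finset (Fin n))
    (hPQ : Disjoint P Q) (hPJ : Disjoint P J) (hQJ : Disjoint Q J)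
    (hcover : P ∪ Q ∪ J = Finset.univ) :
    Equiv.Perm.sign (unshuffle (P ∪ Q)) *
        Equiv.Perm.sign (unshuffle (Finset.subtype (· ∈ P ∪ Q) P)) =
      Equiv.Perm.sign (unshuffle P) *
        Equiv.Perm.sign (unshuffle (Finset.subtype (· ∈ Q ∪ J) Q)) := by
  have hQJP : Q ∪ J = Pᶜ := by
    ext x
    simp only [Finset.mem_union, Finset.mem_compl]
    constructor
    · rintro (h | h)
      · exact fun hP => Finset.disjoint_left.1 hPQ hP h
      · exact fun hP => Finset.disjoint_left.1 hPJ hP h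
    · intro hP
      have : x ∈ P ∪ Q ∪ J := hcover ▸ Finset.mem_univ x
      simp only [Finset.mem_union] at this
      tauto
  rw [hQJP]
  have key := congrArg Equiv.Perm.sign (unshuffle_mul P Q hPQ)
  simp only [map_mul, Equiv.Perm.sign_ofSubtype] at key
  rw [mul_comm] at key
  convert key.trans (mul_comm _ _) <;> exact Subsingleton.elim _ _
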